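/- Let (V, 𝓗) be an arrangement, H₀ ∈ 𝓗, with deleted arrangement 𝓗' = 𝓗 ∖ {H₀} and induced arrangement 𝓗'' = {H ∩ H₀ : H ∈ 𝓗'} in H₀. If 𝓗' is essential (as an arrangement in V) and 𝓗'' is irreducible, then 𝓗 is irreducible. -/

import Mathlib

open scoped Classical

noncomputable section

variable {V : Type*} [AddCommGroup V] [Module ℂ V]

/-- A linear hyperplane in `V`: the kernel of a non-zero linear functional. -/
def IsHyperplane (H : Submodule ℂ V) : Prop :=
  ∃ f : Module.Dual ℂ V, f ≠ 0 ∧ H = LinearMap.ker f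

/-- An arrangement: every member of the finite set `𝓗` is a linear hyperplane. -/
def IsArrangement (𝓗 : Finset (Submodule ℂ V)) : Prop :=
  ∀ H ∈ 𝓗, IsHyperplane H

/-- The span `W(𝓗) ⊆ V⋆` of the defining functionals of the members of `𝓗`,
i.e. the supremum of the dual annihilators of the hyperplanes. -/
def arrSpan (𝓗 : Finset (Submodule ℂ V)) : Submodule ℂ (Module.Dual ℂ V) :=
  ⨆ H ∈ 𝓗, Submodule.dualAnnihilator H

/-- The centre `T(𝓗)`: the common intersection of the members of `𝓗`. -/
def arrCentre (𝓗 : Finset (Submodule ℂ V)) : Submodule ℂ V :=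
  ⨅ H ∈ 𝓗, H

/-- `𝓗` is essential if its centre is zero. -/
def ArrEssential (𝓗 : Finset (Submodule ℂ V)) : Prop :=
  arrCentre 𝓗 = ⊥

/-- `𝓗` is reducible if it admits a u-plus decomposition into two non-empty parts:
a partition `𝓗 = 𝓗₁ ⊎ 𝓗₂` with `W(𝓗) = W(𝓗₁) ⊕ W(𝓗₂)`. -/
def ArrReducible (𝓗 : Finset (Submodule ℂ V)) : Prop :=
  ∃ 𝓗₁ 𝓗₂ : Finset (Submodule ℂ V), 𝓗₁.Nonempty ∧ 𝓗₂.Nonempty ∧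
    Disjoint 𝓗₁ 𝓗₂ ∧ 𝓗₁ ∪ 𝓗₂ = 𝓗 ∧ Disjoint (arrSpan 𝓗₁) (arrSpan 𝓗₂)

/-- `𝓗` is irreducible if it is not reducible. -/
def ArrIrreducible (𝓗 : Finset (Submodule ℂ V)) : Prop :=
  ¬ ArrReducible 𝓗

/-- The induced (restricted) arrangement `𝓗'' = {H ∩ H₀ : H ∈ 𝓗 \ {H₀}}`, viewed as
an arrangement of hyperplanes in the vector space `H₀`. -/
def inducedArr (𝓗 : Finset (Submodule ℂ V)) (H₀ : Submodule ℂ V) :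
    Finset (Submodule ℂ ↥H₀) :=
  (𝓗.erase H₀).image fun H => Submodule.comap H₀.subtype H

section Helpers

variable {W : Type*} [AddCommGroup W] [Module ℂ W]

lemma dualAnnihilator_ker_eq_span (f : Module.Dual ℂ W) :
    (LinearMap.ker f).dualAnnihilator = Submodule.span ℂ {f} := by
  apply le_antisymm
  · intro g hg
    rw [Submodule.mem_dualAnnihilator] at hg
    have h : ⨅ _ : Unit, LinearMap.ker f ≤ LinearMap.ker g := by
      rw [iInf_const]
      intro x hx
      exact hg x hx
    have := mem_span_of_iInf_ker_le_ker (L := fun _ : Unit => f) (K := g) h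
    simpa [Set.range_const] using this
  · rw [Submodule.span_le, Set.singleton_subset_iff]
    rw [SetLike.mem_coe, Submodule.mem_dualAnnihilator]
    intro w hw
    exact hw

lemma dualAnnihilator_le_arrSpan {s : Finset (Submodule ℂ W)} {H : Submodule ℂ W}
    (h : H ∈ s) : H.dualAnnihilator ≤ arrSpan s :=
  le_iSup₂ (f := fun H _ => Submodule.dualAnnihilator H) H h

lemma arrSpan_mono {s t : Finset (Submodule ℂ W)} (h : s ⊆ t) :
    arrSpan s ≤ arrSpan t :=
  iSup₂_le fun H hH => dualAnnihilator_le_arrSpan (h hH)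

lemma arrSpan_eq_top_of_essential [FiniteDimensional ℂ W] {s : Finset (Submodule ℂ W)}
    (h : ArrEssential s) : arrSpan s = ⊤ := by
  have key : arrSpan s = (arrCentre s).dualAnnihilator := by
    rw [arrCentre, arrSpan, iInf_subtype', iSup_subtype']
    exact (Subspace.dualAnnihilator_iInf_eq _).symm
  rw [key, h, Submodule.dualAnnihilator_bot]

end Helpers

lemma aux_irred [FiniteDimensional ℂ V]
    (𝓗 : Finset (Submodule ℂ V)) (harr : IsArrangement 𝓗)
    (H₀ : Submodule ℂ V) (h₀ : H₀ ∈ 𝓗)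
    (hess : ArrEssential (𝓗.erase H₀))
    (hind : ArrIrreducible (inducedArr 𝓗 H₀))
    (𝓗₁ 𝓗₂ : Finset (Submodule ℂ V)) (h1ne : 𝓗₁.Nonempty)
    (hdis : Disjoint 𝓗₁ 𝓗₂) (hunion : 𝓗₁ ∪ 𝓗₂ = 𝓗)
    (hspan : Disjoint (arrSpan 𝓗₁) (arrSpan 𝓗₂)) (hmem : H₀ ∈ 𝓗₂) : False := by
  obtain ⟨f₀, f₀ne, hf₀⟩ := harr H₀ h₀
  have hH₀notin1 : H₀ ∉ 𝓗₁ := fun h => Finset.disjoint_left.mp hdis h hmem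
  have hAnnH₀ : H₀.dualAnnihilator = Submodule.span ℂ {f₀} := by
    rw [hf₀]; exact dualAnnihilator_ker_eq_span f₀
  have hAnnle2 : H₀.dualAnnihilator ≤ arrSpan 𝓗₂ := dualAnnihilator_le_arrSpan hmem
  have hf₀mem2 : f₀ ∈ arrSpan 𝓗₂ :=
    hAnnle2 (by rw [hAnnH₀]; exact Submodule.mem_span_singleton_self f₀)
  -- the part of 𝓗₂ other than H₀ is nonempty
  have h2' : (𝓗₂.erase H₀).Nonempty := by
    by_contra hne
    rw [Finset.not_nonempty_iff_eq_empty] at hne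
    have h2eq : 𝓗₂ = {H₀} := by
      apply Finset.eq_singleton_iff_unique_mem.mpr
      refine ⟨hmem, fun x hx => ?_⟩
      by_contra hxne
      have : x ∈ 𝓗₂.erase H₀ := Finset.mem_erase.mpr ⟨hxne, hx⟩
      simp [hne] at this
    have h1eq : 𝓗₁ = 𝓗.erase H₀ := by
      ext K
      simp only [Finset.mem_erase, ← hunion, Finset.mem_union, h2eq, Finset.mem_singleton]
      constructor
      · intro h
        exact ⟨fun he => hH₀notin1 (he ▸ h), Or.inl h⟩
      · rintro ⟨hne', h | rfl⟩
        · exact h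
        · exact absurd rfl hne'
    have htop : arrSpan 𝓗₁ = ⊤ := by
      rw [h1eq]; exact arrSpan_eq_top_of_essential hess
    exact f₀ne (Submodule.disjoint_def.mp hspan f₀ (htop ▸ Submodule.mem_top) hf₀mem2)
  set ι := H₀.subtype with hι
  set r := ι.dualMap with hr
  have hcomap : ∀ f : Module.Dual ℂ V,
      Submodule.comap ι (LinearMap.ker f) = LinearMap.ker (r f) := by
    intro f
    ext x
    simp [Submodule.mem_comap, LinearMap.mem_ker, hr, LinearMap.dualMap_apply]
  have hker : ∀ f : Module.Dual ℂ V, r f = 0 → f ∈ H₀.dualAnnihilator := by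
    intro f hf
    rw [Submodule.mem_dualAnnihilator]
    intro w hw
    simpa [hr, hι] using DFunLike.congr_fun hf ⟨w, hw⟩
  have hspanle : ∀ s : Finset (Submodule ℂ V), (∀ H ∈ s, IsHyperplane H) →
      arrSpan (s.image fun H => Submodule.comap ι H) ≤ Submodule.map r (arrSpan s) := by
    intro s hs
    refine iSup₂_le fun K hK => ?_
    obtain ⟨H, hH, rfl⟩ := Finset.mem_image.mp hK
    obtain ⟨f, fne, hf⟩ := hs H hH
    subst hf
    rw [hcomap f, dualAnnihilator_ker_eq_span]
    have heq : Submodule.span ℂ {r f} = Submodule.map r (Submodule.span ℂ {f}) := by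
      rw [Submodule.map_span, Set.image_singleton]
    rw [heq]
    refine Submodule.map_mono ?_
    rw [← dualAnnihilator_ker_eq_span]
    exact dualAnnihilator_le_arrSpan hH
  set 𝓖₁ := 𝓗₁.image fun H => Submodule.comap ι H with hG1
  set 𝓖₂ := (𝓗₂.erase H₀).image fun H => Submodule.comap ι H with hG2
  have hs1 : ∀ H ∈ 𝓗₁, IsHyperplane H := fun H h =>
    harr H (by rw [← hunion]; exact Finset.mem_union_left _ h)
  have hs2 : ∀ H ∈ 𝓗₂.erase H₀, IsHyperplane H := fun H h =>
    harr H (by rw [← hunion]; exact Finset.mem_union_right _ (Finset.mem_of_mem_erase h))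
  have hle1 := hspanle 𝓗₁ hs1
  have hle2 : arrSpan 𝓖₂ ≤ Submodule.map r (arrSpan 𝓗₂) :=
    (hspanle _ hs2).trans (Submodule.map_mono (arrSpan_mono (Finset.erase_subset _ _)))
  -- the induced spans are disjoint
  have hdisG : Disjoint (arrSpan 𝓖₁) (arrSpan 𝓖₂) := by
    rw [Submodule.disjoint_def]
    intro g hg1 hg2
    obtain ⟨f₁, hf₁, rfl⟩ := hle1 hg1
    obtain ⟨f₂, hf₂, heq⟩ := hle2 hg2
    have hdiff : f₁ - f₂ ∈ H₀.dualAnnihilator := hker _ (by rw [map_sub, heq, sub_self])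
    have hf₁2 : f₁ ∈ arrSpan 𝓗₂ := by
      have h1 : f₁ - f₂ ∈ arrSpan 𝓗₂ := hAnnle2 hdiff
      have h2 := add_mem h1 hf₂
      simpa using h2
    rw [Submodule.disjoint_def.mp hspan f₁ hf₁ hf₁2, map_zero]
  -- the induced parts are disjoint finsets
  have hGdis : Disjoint 𝓖₁ 𝓖₂ := by
    rw [Finset.disjoint_left]
    intro K hK1 hK2
    obtain ⟨H₁, hH₁, hKeq⟩ := Finset.mem_image.mp hK1
    obtain ⟨f₁, f₁ne, hf₁⟩ := hs1 H₁ hH₁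
    have hKk : K = LinearMap.ker (r f₁) := by rw [← hKeq, hf₁, hcomap]
    have hself : r f₁ ∈ K.dualAnnihilator := by
      rw [hKk, dualAnnihilator_ker_eq_span]
      exact Submodule.mem_span_singleton_self _
    have hmem1 : r f₁ ∈ arrSpan 𝓖₁ := dualAnnihilator_le_arrSpan hK1 hself
    have hmem2 : r f₁ ∈ arrSpan 𝓖₂ := dualAnnihilator_le_arrSpan hK2 hself
    have hrzero : r f₁ = 0 := Submodule.disjoint_def.mp hdisG _ hmem1 hmem2
    have hin2 : f₁ ∈ arrSpan 𝓗₂ := hAnnle2 (hker f₁ hrzero)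
    have hin1 : f₁ ∈ arrSpan 𝓗₁ := by
      refine dualAnnihilator_le_arrSpan hH₁ ?_
      rw [hf₁, dualAnnihilator_ker_eq_span]
      exact Submodule.mem_span_singleton_self _
    exact f₁ne (Submodule.disjoint_def.mp hspan f₁ hin1 hin2)
  -- the induced parts cover the induced arrangement
  have herase : 𝓗.erase H₀ = 𝓗₁ ∪ 𝓗₂.erase H₀ := by
    ext K
    simp only [Finset.mem_erase, ← hunion, Finset.mem_union]
    constructor
    · rintro ⟨hne, h | h⟩
      · exact Or.inl h
      · exact Or.inr ⟨hne, h⟩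
    · rintro (h | ⟨hne, h⟩)
      · exact ⟨fun he => hH₀notin1 (he ▸ h), Or.inl h⟩
      · exact ⟨hne, Or.inr h⟩
  have hGunion : 𝓖₁ ∪ 𝓖₂ = inducedArr 𝓗 H₀ := by
    rw [inducedArr, herase, Finset.image_union]
  exact hind ⟨𝓖₁, 𝓖₂, h1ne.image _, h2'.image _, hGdis, hGunion, hdisG⟩

/-- If the deleted arrangement `𝓗' = 𝓗 \ {H₀}` is essential and the
induced arrangement `𝓗''` on `H₀` is irreducible, then `𝓗` is irreducible. -/
theorem irreducible_of_deleted_essential_induced_irreducible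
    [FiniteDimensional ℂ V]
    (𝓗 : Finset (Submodule ℂ V)) (harr : IsArrangement 𝓗)
    (H₀ : Submodule ℂ V) (h₀ : H₀ ∈ 𝓗)
    (hess : ArrEssential (𝓗.erase H₀))
    (hind : ArrIrreducible (inducedArr 𝓗 H₀)) :
    ArrIrreducible 𝓗 := by
  intro hred
  obtain ⟨𝓗₁, 𝓗₂, h1, h2, hdis, hunion, hspan⟩ := hred
  have hH₀ : H₀ ∈ 𝓗₁ ∪ 𝓗₂ := by rw [hunion]; exact h₀
  rcases Finset.mem_union.mp hH₀ with h | h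
  · exact aux_irred 𝓗 harr H₀ h₀ hess hind 𝓗₂ 𝓗₁ h2 hdis.symm
      (by rw [Finset.union_comm]; exact hunion) hspan.symm h
  · exact aux_irred 𝓗 harr H₀ h₀ hess hind 𝓗₁ 𝓗₂ h1 hdis hunion hspan h
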